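/- For all y in the open interval (-π/2, π/2), |tan(y) - y| ≤ |y^2 · tan(y)|. -/

import Mathlib

open Real in
private lemma aux_tan (y : ℝ) (h0 : 0 ≤ y) (h : y < π / 2) :
    |Real.tan y - y| ≤ |y ^ 2 * Real.tan y| := by
  have hc : 0 < Real.cos y := Real.cos_pos_of_mem_Ioo ⟨by linarith [Real.pi_pos], h⟩
  have htn : 0 ≤ Real.tan y := Real.tan_nonneg_of_nonneg_of_le_pi_div_two h0 h.le
  have hty : y ≤ Real.tan y := by
    rcases eq_or_lt_of_le h0 with h0 | h0
    · simp [← h0]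
    · exact (Real.lt_tan h0 h).le
  rw [abs_of_nonneg (sub_nonneg.2 hty), abs_of_nonneg (by positivity)]
  rw [← mul_le_mul_iff_of_pos_right hc, sub_mul, mul_assoc, Real.tan_mul_cos hc.ne']
  have hs : Real.sin y ≤ y := Real.sin_le h0
  have hsn : 0 ≤ Real.sin y := Real.sin_nonneg_of_nonneg_of_le_pi h0 (by linarith [Real.pi_pos])
  have hcb : 1 - y ^ 2 / 2 ≤ Real.cos y := Real.one_sub_sq_div_two_le_cos
  -- goal: sin y - y * cos y ≤ y ^ 2 * sin y
  rcases le_or_gt y 1 with h1 | h1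
  · nlinarith [mul_nonneg h0 hc.le, sq_nonneg y]
  · nlinarith [mul_nonneg h0 hc.le, mul_nonneg hsn (by nlinarith : (0:ℝ) ≤ y ^ 2 - 1)]

open Real in
theorem abs_tan_sub_self_le (y : ℝ) (hy : y ∈ Set.Ioo (-(π / 2)) (π / 2)) :
    |Real.tan y - y| ≤ |y ^ 2 * Real.tan y| := by
  rcases le_or_gt 0 y with h0 | h0
  · exact aux_tan y h0 hy.2
  · have := aux_tan (-y) (by linarith) (by linarith [hy.1])
    rw [Real.tan_neg, neg_sq, sub_neg_eq_add, mul_neg, abs_neg] at this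
    calc |Real.tan y - y| = |-Real.tan y + y| := by rw [← abs_neg]; ring_nf
      _ ≤ |y ^ 2 * Real.tan y| := this
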